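/- arXiv:math/0506294 — 7 statements merged into one kernel-verified Lean document; each statement's English description precedes it below -/
import Mathlib

section
/- Let q > 1 be a natural number, c an odd prime not dividing q, and suppose e(c,q) ≡ 2 (mod 4), where e(c,q) is the multiplicative order of q modulo c. Then for any natural number x, c divides q^x - (-1)^x if and only if e(c,q)/2 divides x. -/
theorem stmt_2 (q c x : ℕ) (hq : 1 < q) (hc : c.Prime) (hodd : Odd c)
    (hcq : ¬ c ∣ q) (he : orderOf (q : ZMod c) % 4 = 2) :
    (c : ℤ) ∣ (q : ℤ) ^ x - (-1) ^ x ↔ orderOf (q : ZMod c) / 2 ∣ x := by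
  haveI := Fact.mk hc
  set e := orderOf (q : ZMod c) with hedef
  set m := e / 2 with hmdef
  have hm2 : e = 2 * m := by omega
  have hmodd : Odd m := Nat.odd_iff.mpr (by omega)
  have hm0 : m ≠ 0 := by omega
  -- (q : ZMod c) ^ m = -1
  have hord2 : orderOf ((q : ZMod c) ^ m) = 2 := by
    rw [orderOf_pow' ((q : ZMod c)) hm0, ← hedef, Nat.gcd_eq_right ⟨2, by omega⟩, hm2]
    exact Nat.mul_div_cancel _ (Nat.pos_of_ne_zero hm0)
  have hsq : ((q : ZMod c) ^ m) * ((q : ZMod c) ^ m) = 1 := by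
    have := pow_orderOf_eq_one ((q : ZMod c) ^ m)
    rw [hord2, pow_two] at this
    exact this
  have hne1 : (q : ZMod c) ^ m ≠ 1 := by
    intro h
    rw [h, orderOf_one] at hord2
    omega
  have hqm : (q : ZMod c) ^ m = -1 := by
    rcases mul_self_eq_one_iff.mp hsq with h | h
    · exact absurd h hne1
    · exact h
  have hcast : ((c : ℤ) ∣ (q : ℤ) ^ x - (-1) ^ x) ↔ (q : ZMod c) ^ x = (-1) ^ x := by
    rw [← ZMod.intCast_zmod_eq_zero_iff_dvd]
    push_cast
    constructor
    · intro h; linear_combination h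
    · intro h; linear_combination h
  rw [hcast]
  constructor
  · intro h
    have h2 : (q : ZMod c) ^ (x * 2) = 1 := by
      rw [pow_mul, h, ← pow_mul, mul_comm, pow_mul, neg_one_sq, one_pow]
    have hdvd : e ∣ x * 2 := orderOf_dvd_of_pow_eq_one h2
    rw [hm2] at hdvd
    rcases hdvd with ⟨k, hk⟩
    exact ⟨k, by rw [mul_assoc] at hk; omega⟩
  · rintro ⟨k, rfl⟩
    rw [pow_mul, hqm, pow_mul, hmodd.neg_one_pow]
end

section
/- Let q > 1 be a natural number, c an odd prime not dividing q, and suppose e(c,q) ≡ 0 (mod 4), where e(c,q) is the multiplicative order of q modulo c. Then for any natural number x, c divides q^x - (-1)^x if and only if e(c,q) divides x. -/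
theorem stmt_3 (q c x : ℕ) (hq : 1 < q) (hc : c.Prime) (hodd : Odd c)
    (hcq : ¬ c ∣ q) (he : orderOf (q : ZMod c) % 4 = 0) :
    (c : ℤ) ∣ (q : ℤ) ^ x - (-1) ^ x ↔ orderOf (q : ZMod c) ∣ x := by
  have he4 : 4 ∣ orderOf (q : ZMod c) := Nat.dvd_of_mod_eq_zero he
  have key : (c : ℤ) ∣ (q : ℤ) ^ x - (-1) ^ x ↔ ((q : ZMod c)) ^ x = (-1) ^ x := by
    rw [← ZMod.intCast_zmod_eq_zero_iff_dvd]
    push_cast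
    rw [sub_eq_zero]
  rw [key]
  rcases Nat.even_or_odd x with hx | hx
  · rw [hx.neg_one_pow, ← orderOf_dvd_iff_pow_eq_one]
  · rw [hx.neg_one_pow]
    have hxo : x % 2 = 1 := Nat.odd_iff.mp hx
    constructor
    · intro h
      exfalso
      have h2 : ((q : ZMod c)) ^ (x * 2) = 1 := by rw [pow_mul, h]; norm_num
      have hd : orderOf (q : ZMod c) ∣ x * 2 := orderOf_dvd_of_pow_eq_one h2
      obtain ⟨k, hk⟩ := he4.trans hd
      omega
    · intro h
      exfalso
      obtain ⟨k, hk⟩ := he4.trans h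
      omega
end

section
/- For every natural number n, the three numbers m1 = 2^(2n+1) - 1, m2 = 2^(2n+1) - 2^(n+1) + 1, and m3 = 2^(2n+1) + 2^(n+1) + 1 are pairwise coprime. -/
theorem stmt_8 (n : ℕ) :
    Nat.Coprime (2 ^ (2 * n + 1) - 1) (2 ^ (2 * n + 1) - 2 ^ (n + 1) + 1) ∧
    Nat.Coprime (2 ^ (2 * n + 1) - 1) (2 ^ (2 * n + 1) + 2 ^ (n + 1) + 1) ∧
    Nat.Coprime (2 ^ (2 * n + 1) - 2 ^ (n + 1) + 1) (2 ^ (2 * n + 1) + 2 ^ (n + 1) + 1) := by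
  set a := 2 ^ (2 * n + 1) with ha
  set b := 2 ^ (n + 1) with hb
  have hba : b ≤ a := Nat.pow_le_pow_right (by norm_num) (by omega)
  have ha2 : 2 ∣ a := dvd_pow_self 2 (by omega)
  have hb2 : 2 ∣ b := dvd_pow_self 2 (by omega)
  have ha1 : 2 ≤ a := le_trans (by norm_num) (Nat.pow_le_pow_right (by norm_num) (by omega) : 2^1 ≤ a)
  have hbb : b * b = 2 * a := by
    rw [ha, hb, ← pow_add, ← pow_succ']
    ring_nf
  -- product identity
  have hprod : (a - b + 1) * (a + b + 1) = a * a + 1 := by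
    have hbbz : (b : ℤ) * b = 2 * a := by exact_mod_cast hbb
    zify [hba]
    linear_combination -hbbz
  -- m1 odd
  have hodd1 : Odd (a - 1) := by
    rcases ha2 with ⟨k, hk⟩; exact ⟨k - 1, by omega⟩
  have hodd2 : Odd (a - b + 1) := by
    rcases ha2 with ⟨k, hk⟩; rcases hb2 with ⟨l, hl⟩
    exact ⟨k - l, by omega⟩
  -- m1 coprime with product
  have hfact : a * a + 1 = 2 + (a + 1) * (a - 1) := by
    obtain ⟨c, hc⟩ := Nat.exists_eq_add_of_le ha1
    rw [hc]
    have h1 : 2 + c - 1 = c + 1 := by omega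
    rw [h1]; ring
  have hcp : Nat.Coprime (a - 1) ((a - b + 1) * (a + b + 1)) := by
    rw [hprod, hfact]
    rw [Nat.coprime_add_mul_right_right]
    exact Nat.coprime_two_right.mpr hodd1
  have h12 : Nat.Coprime (a - 1) (a - b + 1) := Nat.Coprime.coprime_dvd_right ⟨a + b + 1, rfl⟩ hcp
  have h13 : Nat.Coprime (a - 1) (a + b + 1) :=
    Nat.Coprime.coprime_dvd_right (Dvd.intro_left _ rfl) hcp
  have h23 : Nat.Coprime (a - b + 1) (a + b + 1) := by
    have h : a + b + 1 = 2 * b + (a - b + 1) := by omega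
    rw [h, Nat.coprime_add_self_right]
    exact Nat.Coprime.mul_right (Nat.coprime_two_right.mpr hodd2)
      (Nat.Coprime.pow_right _ (Nat.coprime_two_right.mpr hodd2))
  exact ⟨h12, h13, h23⟩
end

section
/- For every natural number n, set m1 = 3^(2n+1) - 1, m2 = 3^(2n+1) + 1, m3 = 3^(2n+1) - 3^(n+1) + 1, m4 = 3^(2n+1) + 3^(n+1) + 1. Then gcd(m1, m2) = 2, and gcd(mi, mj) = 1 for all other pairs i ≠ j. -/
private lemma aux1 (n : ℕ) (d : ℤ) (hA : d ∣ 3^(2*n+1) - 1) (hB : d ∣ 3^(2*n+1) + 1) :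
    d ∣ 2 := by
  have h := dvd_sub hB hA
  have e : (3:ℤ)^(2*n+1) + 1 - (3^(2*n+1) - 1) = 2 := by ring
  rwa [e] at h

private lemma aux2 (n : ℕ) (d : ℤ) (hA : d ∣ 3^(2*n+1) - 1)
    (hB : d ∣ 3^(2*n+1) - 3^(n+1) + 1) : d ∣ 1 := by
  have h1 : d ∣ 3^(n+1) - 2 := by
    have h := dvd_sub hA hB
    have e : (3:ℤ)^(2*n+1) - 1 - (3^(2*n+1) - 3^(n+1) + 1) = 3^(n+1) - 2 := by ring
    rwa [e] at h
  have h2 : d ∣ 3^(n+1) * 3^(n+1) - 4 := by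
    have h := h1.mul_left ((3:ℤ)^(n+1) + 2)
    have e : ((3:ℤ)^(n+1) + 2) * (3^(n+1) - 2) = 3^(n+1) * 3^(n+1) - 4 := by ring
    rwa [e] at h
  have h3 : d ∣ 3^(n+1) * 3^(n+1) - 3 := by
    have h := hA.mul_left (3:ℤ)
    have e : (3:ℤ) * (3^(2*n+1) - 1) = 3^(n+1) * 3^(n+1) - 3 := by ring
    rwa [e] at h
  have h := dvd_sub h3 h2
  have e : (3:ℤ)^(n+1) * 3^(n+1) - 3 - (3^(n+1) * 3^(n+1) - 4) = 1 := by ring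
  rwa [e] at h

private lemma aux3 (n : ℕ) (d : ℤ) (hA : d ∣ 3^(2*n+1) - 1)
    (hB : d ∣ 3^(2*n+1) + 3^(n+1) + 1) : d ∣ 1 := by
  have h1 : d ∣ 3^(n+1) + 2 := by
    have h := dvd_sub hB hA
    have e : (3:ℤ)^(2*n+1) + 3^(n+1) + 1 - (3^(2*n+1) - 1) = 3^(n+1) + 2 := by ring
    rwa [e] at h
  have h2 : d ∣ 3^(n+1) * 3^(n+1) - 4 := by
    have h := h1.mul_left ((3:ℤ)^(n+1) - 2)
    have e : ((3:ℤ)^(n+1) - 2) * (3^(n+1) + 2) = 3^(n+1) * 3^(n+1) - 4 := by ring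
    rwa [e] at h
  have h3 : d ∣ 3^(n+1) * 3^(n+1) - 3 := by
    have h := hA.mul_left (3:ℤ)
    have e : (3:ℤ) * (3^(2*n+1) - 1) = 3^(n+1) * 3^(n+1) - 3 := by ring
    rwa [e] at h
  have h := dvd_sub h3 h2
  have e : (3:ℤ)^(n+1) * 3^(n+1) - 3 - (3^(n+1) * 3^(n+1) - 4) = 1 := by ring
  rwa [e] at h

private lemma aux4 (n : ℕ) (d : ℤ) (hA : d ∣ 3^(2*n+1) + 1)
    (hB : d ∣ 3^(2*n+1) - 3^(n+1) + 1) : d ∣ 1 := by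
  have h1 : d ∣ 3^(n+1) := by
    have h := dvd_sub hA hB
    have e : (3:ℤ)^(2*n+1) + 1 - (3^(2*n+1) - 3^(n+1) + 1) = 3^(n+1) := by ring
    rwa [e] at h
  have h2 : d ∣ 3 := by
    have h := dvd_sub (hA.mul_left (3:ℤ)) (h1.mul_left ((3:ℤ)^(n+1)))
    have e : (3:ℤ) * (3^(2*n+1) + 1) - 3^(n+1) * 3^(n+1) = 3 := by ring
    rwa [e] at h
  have h := dvd_sub hB (h2.mul_left ((3:ℤ)^(2*n) - 3^n))
  have e : (3:ℤ)^(2*n+1) - 3^(n+1) + 1 - (3^(2*n) - 3^n) * 3 = 1 := by ring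
  rwa [e] at h

private lemma aux5 (n : ℕ) (d : ℤ) (hA : d ∣ 3^(2*n+1) + 1)
    (hB : d ∣ 3^(2*n+1) + 3^(n+1) + 1) : d ∣ 1 := by
  have h1 : d ∣ 3^(n+1) := by
    have h := dvd_sub hB hA
    have e : (3:ℤ)^(2*n+1) + 3^(n+1) + 1 - (3^(2*n+1) + 1) = 3^(n+1) := by ring
    rwa [e] at h
  have h2 : d ∣ 3 := by
    have h := dvd_sub (hA.mul_left (3:ℤ)) (h1.mul_left ((3:ℤ)^(n+1)))
    have e : (3:ℤ) * (3^(2*n+1) + 1) - 3^(n+1) * 3^(n+1) = 3 := by ring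
    rwa [e] at h
  have h := dvd_sub hB (h2.mul_left ((3:ℤ)^(2*n) + 3^n))
  have e : (3:ℤ)^(2*n+1) + 3^(n+1) + 1 - (3^(2*n) + 3^n) * 3 = 1 := by ring
  rwa [e] at h

theorem stmt_9 (n : ℕ) :
    Nat.gcd (3 ^ (2 * n + 1) - 1) (3 ^ (2 * n + 1) + 1) = 2 ∧
    Nat.gcd (3 ^ (2 * n + 1) - 1) (3 ^ (2 * n + 1) - 3 ^ (n + 1) + 1) = 1 ∧
    Nat.gcd (3 ^ (2 * n + 1) - 1) (3 ^ (2 * n + 1) + 3 ^ (n + 1) + 1) = 1 ∧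
    Nat.gcd (3 ^ (2 * n + 1) + 1) (3 ^ (2 * n + 1) - 3 ^ (n + 1) + 1) = 1 ∧
    Nat.gcd (3 ^ (2 * n + 1) + 1) (3 ^ (2 * n + 1) + 3 ^ (n + 1) + 1) = 1 ∧
    Nat.gcd (3 ^ (2 * n + 1) - 3 ^ (n + 1) + 1) (3 ^ (2 * n + 1) + 3 ^ (n + 1) + 1) = 1 := by
  have h1q : (1:ℕ) ≤ 3^(2*n+1) := Nat.one_le_pow _ _ (by norm_num)
  have htq : (3:ℕ)^(n+1) ≤ 3^(2*n+1) := Nat.pow_le_pow_right (by norm_num) (by omega)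
  have cA : ((3^(2*n+1) - 1 : ℕ) : ℤ) = 3^(2*n+1) - 1 := by push_cast [h1q]; ring
  have cB : ((3^(2*n+1) + 1 : ℕ) : ℤ) = 3^(2*n+1) + 1 := by push_cast; ring
  have cC : ((3^(2*n+1) - 3^(n+1) + 1 : ℕ) : ℤ) = 3^(2*n+1) - 3^(n+1) + 1 := by
    push_cast [htq]; ring
  have cD : ((3^(2*n+1) + 3^(n+1) + 1 : ℕ) : ℤ) = 3^(2*n+1) + 3^(n+1) + 1 := by push_cast; ring
  have hoddq : 3^(2*n+1) % 2 = 1 := Nat.odd_iff.mp (Odd.pow (by decide))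
  have hoddt : 3^(n+1) % 2 = 1 := Nat.odd_iff.mp (Odd.pow (by decide))
  refine ⟨?_, ?_, ?_, ?_, ?_, ?_⟩
  · set d := Nat.gcd (3 ^ (2 * n + 1) - 1) (3 ^ (2 * n + 1) + 1) with hd
    have hA : (d:ℤ) ∣ 3^(2*n+1) - 1 := cA ▸ Int.natCast_dvd_natCast.mpr (Nat.gcd_dvd_left _ _)
    have hB : (d:ℤ) ∣ 3^(2*n+1) + 1 := cB ▸ Int.natCast_dvd_natCast.mpr (Nat.gcd_dvd_right _ _)
    have h2 : d ∣ 2 := by exact_mod_cast aux1 n _ hA hB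
    have h2' : 2 ∣ d := Nat.dvd_gcd (by omega) (by omega)
    exact Nat.dvd_antisymm h2 h2'
  · set d := Nat.gcd (3 ^ (2 * n + 1) - 1) (3 ^ (2 * n + 1) - 3 ^ (n + 1) + 1) with hd
    have hA : (d:ℤ) ∣ 3^(2*n+1) - 1 := cA ▸ Int.natCast_dvd_natCast.mpr (Nat.gcd_dvd_left _ _)
    have hB : (d:ℤ) ∣ 3^(2*n+1) - 3^(n+1) + 1 :=
      cC ▸ Int.natCast_dvd_natCast.mpr (Nat.gcd_dvd_right _ _)
    have h1 : d ∣ 1 := by exact_mod_cast aux2 n _ hA hB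
    exact Nat.dvd_one.mp h1
  · set d := Nat.gcd (3 ^ (2 * n + 1) - 1) (3 ^ (2 * n + 1) + 3 ^ (n + 1) + 1) with hd
    have hA : (d:ℤ) ∣ 3^(2*n+1) - 1 := cA ▸ Int.natCast_dvd_natCast.mpr (Nat.gcd_dvd_left _ _)
    have hB : (d:ℤ) ∣ 3^(2*n+1) + 3^(n+1) + 1 :=
      cD ▸ Int.natCast_dvd_natCast.mpr (Nat.gcd_dvd_right _ _)
    have h1 : d ∣ 1 := by exact_mod_cast aux3 n _ hA hB
    exact Nat.dvd_one.mp h1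
  · set d := Nat.gcd (3 ^ (2 * n + 1) + 1) (3 ^ (2 * n + 1) - 3 ^ (n + 1) + 1) with hd
    have hA : (d:ℤ) ∣ 3^(2*n+1) + 1 := cB ▸ Int.natCast_dvd_natCast.mpr (Nat.gcd_dvd_left _ _)
    have hB : (d:ℤ) ∣ 3^(2*n+1) - 3^(n+1) + 1 :=
      cC ▸ Int.natCast_dvd_natCast.mpr (Nat.gcd_dvd_right _ _)
    have h1 : d ∣ 1 := by exact_mod_cast aux4 n _ hA hB
    exact Nat.dvd_one.mp h1
  · set d := Nat.gcd (3 ^ (2 * n + 1) + 1) (3 ^ (2 * n + 1) + 3 ^ (n + 1) + 1) with hd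
    have hA : (d:ℤ) ∣ 3^(2*n+1) + 1 := cB ▸ Int.natCast_dvd_natCast.mpr (Nat.gcd_dvd_left _ _)
    have hB : (d:ℤ) ∣ 3^(2*n+1) + 3^(n+1) + 1 :=
      cD ▸ Int.natCast_dvd_natCast.mpr (Nat.gcd_dvd_right _ _)
    have h1 : d ∣ 1 := by exact_mod_cast aux5 n _ hA hB
    exact Nat.dvd_one.mp h1
  · set d := Nat.gcd (3 ^ (2 * n + 1) - 3 ^ (n + 1) + 1) (3 ^ (2 * n + 1) + 3 ^ (n + 1) + 1)
      with hd
    have hdC : d ∣ 3 ^ (2 * n + 1) - 3 ^ (n + 1) + 1 := Nat.gcd_dvd_left _ _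
    have hC : (d:ℤ) ∣ 3^(2*n+1) - 3^(n+1) + 1 := cC ▸ Int.natCast_dvd_natCast.mpr hdC
    have hD : (d:ℤ) ∣ 3^(2*n+1) + 3^(n+1) + 1 :=
      cD ▸ Int.natCast_dvd_natCast.mpr (Nat.gcd_dvd_right _ _)
    -- d is odd
    have h2d : ¬ 2 ∣ d := by
      intro h
      have h' := h.trans hdC
      omega
    have hcop : Nat.Coprime d 2 := ((Nat.prime_two.coprime_iff_not_dvd).mpr h2d).symm
    -- d ∣ 2 * 3^(n+1)
    have h2t : (d:ℤ) ∣ 2 * 3^(n+1) := by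
      have h := dvd_sub hD hC
      have e : (3:ℤ)^(2*n+1) + 3^(n+1) + 1 - (3^(2*n+1) - 3^(n+1) + 1) = 2 * 3^(n+1) := by ring
      rwa [e] at h
    have h2t' : d ∣ 2 * 3^(n+1) := by exact_mod_cast h2t
    have hdt : d ∣ 3^(n+1) :=
      hcop.dvd_of_dvd_mul_right (show d ∣ 3^(n+1) * 2 by rwa [mul_comm] at h2t')
    have hdt' : (d:ℤ) ∣ 3^(n+1) := by exact_mod_cast hdt
    have h3 : (d:ℤ) ∣ 3 := by
      have h := dvd_sub (hC.mul_left (3:ℤ)) (hdt'.mul_left ((3:ℤ)^(n+1) - 3))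
      have e : (3:ℤ) * (3^(2*n+1) - 3^(n+1) + 1) - (3^(n+1) - 3) * 3^(n+1) = 3 := by ring
      rwa [e] at h
    have hfin : (d:ℤ) ∣ 1 := by
      have h := dvd_sub hC (h3.mul_left ((3:ℤ)^(2*n) - 3^n))
      have e : (3:ℤ)^(2*n+1) - 3^(n+1) + 1 - (3^(2*n) - 3^n) * 3 = 1 := by ring
      rwa [e] at h
    exact Nat.dvd_one.mp (by exact_mod_cast hfin)
end

section
/- For every natural number n, with q = 2^(2n+1), set m1 = q - 1, m2 = q + 1, m3 = q² + 1, m4 = q² - q + 1, m5 = q² - q·2^(n+1) + q - 2^(n+1) + 1, m6 = q² + q·2^(n+1) + q + 2^(n+1) + 1. Then gcd(m2, m4) = 3 and gcd(mi, mj) = 1 for all other pairs i ≠ j. -/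
private lemma nat_gcd_one_of_int {a b : ℕ} (h : IsCoprime (a:ℤ) (b:ℤ)) :
    Nat.gcd a b = 1 :=
  Nat.isCoprime_iff_coprime.mp h

theorem stmt_10 (n : ℕ) (q : ℕ) (hq : q = 2 ^ (2 * n + 1)) :
    let m1 := q - 1
    let m2 := q + 1
    let m3 := q ^ 2 + 1
    let m4 := q ^ 2 - q + 1
    let m5 := q ^ 2 - q * 2 ^ (n + 1) + q - 2 ^ (n + 1) + 1
    let m6 := q ^ 2 + q * 2 ^ (n + 1) + q + 2 ^ (n + 1) + 1
    Nat.gcd m2 m4 = 3 ∧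
    Nat.gcd m1 m2 = 1 ∧ Nat.gcd m1 m3 = 1 ∧ Nat.gcd m1 m4 = 1 ∧
    Nat.gcd m1 m5 = 1 ∧ Nat.gcd m1 m6 = 1 ∧
    Nat.gcd m2 m3 = 1 ∧ Nat.gcd m2 m5 = 1 ∧ Nat.gcd m2 m6 = 1 ∧
    Nat.gcd m3 m4 = 1 ∧ Nat.gcd m3 m5 = 1 ∧ Nat.gcd m3 m6 = 1 ∧
    Nat.gcd m4 m5 = 1 ∧ Nat.gcd m4 m6 = 1 ∧ Nat.gcd m5 m6 = 1 := by
  intro m1 m2 m3 m4 m5 m6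
  set x : ℤ := 2^n with hx
  have hqx : (q:ℤ) = 2*x^2 := by rw [hq]; push_cast; ring
  have htx : ((2^(n+1):ℕ):ℤ) = 2*x := by push_cast; ring
  have hq1 : 1 ≤ q := by rw [hq]; exact Nat.one_le_two_pow
  have hqq : q ≤ q^2 := Nat.le_self_pow (by norm_num) q
  have htq : 2^(n+1) ≤ q := by rw [hq]; exact Nat.pow_le_pow_right (by norm_num) (by omega)
  have hqt : q * 2^(n+1) ≤ q^2 := by
    calc q * 2^(n+1) ≤ q*q := Nat.mul_le_mul_left _ htq
      _ = q^2 := (sq q).symm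
  have h2' : 2^(n+1) ≤ q^2 - q*2^(n+1) + q := le_trans htq (Nat.le_add_left _ _)
  -- integer forms
  have e1 : ((m1 : ℕ) : ℤ) = 2*x^2 - 1 := by
    show ((q - 1 : ℕ) : ℤ) = _
    rw [Nat.cast_sub hq1, hqx]; norm_num
  have e2 : ((m2 : ℕ) : ℤ) = 2*x^2 + 1 := by
    show ((q + 1 : ℕ) : ℤ) = _; push_cast [hqx]; ring
  have e3 : ((m3 : ℕ) : ℤ) = 4*x^4 + 1 := by
    show ((q^2 + 1 : ℕ) : ℤ) = _; push_cast [hqx]; ring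
  have e4 : ((m4 : ℕ) : ℤ) = 4*x^4 - 2*x^2 + 1 := by
    show ((q^2 - q + 1 : ℕ) : ℤ) = _
    rw [Nat.cast_add, Nat.cast_sub hqq]; push_cast [hqx]; ring
  have e5 : ((m5 : ℕ) : ℤ) = 4*x^4 - 4*x^3 + 2*x^2 - 2*x + 1 := by
    show ((q^2 - q*2^(n+1) + q - 2^(n+1) + 1 : ℕ) : ℤ) = _
    rw [Nat.cast_add, Nat.cast_sub h2', Nat.cast_add, Nat.cast_sub hqt, htx]
    push_cast [hqx]; ring
  have e6 : ((m6 : ℕ) : ℤ) = 4*x^4 + 4*x^3 + 2*x^2 + 2*x + 1 := by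
    show ((q^2 + q*2^(n+1) + q + 2^(n+1) + 1 : ℕ) : ℤ) = _
    push_cast [hqx]; ring
  -- mod 3 facts
  have h4n : ∀ k : ℕ, 4^k % 3 = 1 := by
    intro k; rw [Nat.pow_mod]; norm_num
  have hq3 : q % 3 = 2 := by
    have : q = 4^n * 2 := by rw [hq, pow_succ, pow_mul]; norm_num
    rw [this, Nat.mul_mod, h4n]
  have hq23 : q^2 % 3 = 1 := by
    have : q^2 = 4^(2*n+1) := by rw [hq, ← pow_mul, mul_comm (2*n+1) 2, pow_mul]; norm_num
    rw [this, h4n]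
  -- the gcd(m2,m4) = 3 part
  have h3m2 : 3 ∣ m2 := by show 3 ∣ q + 1; omega
  have h3m4 : 3 ∣ m4 := by show 3 ∣ q^2 - q + 1; omega
  have hd3 : Nat.gcd m2 m4 ∣ 3 := by
    have d2 : ((Nat.gcd m2 m4 : ℕ) : ℤ) ∣ (m2:ℤ) := Int.natCast_dvd_natCast.mpr (Nat.gcd_dvd_left _ _)
    have d4 : ((Nat.gcd m2 m4 : ℕ) : ℤ) ∣ (m4:ℤ) := Int.natCast_dvd_natCast.mpr (Nat.gcd_dvd_right _ _)
    have : ((Nat.gcd m2 m4 : ℕ) : ℤ) ∣ ((3:ℕ):ℤ) := by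
      have key : ((3:ℕ):ℤ) = (m4:ℤ) - (m2:ℤ) * (2*x^2 - 2) := by
        rw [e2, e4]; push_cast; ring
      rw [key]; exact dvd_sub d4 (Dvd.dvd.mul_right d2 _)
    exact Int.natCast_dvd_natCast.mp this
  -- coprimality of m3 with 3
  have hcop3 : IsCoprime ((m3:ℕ):ℤ) ((3:ℕ):ℤ) := by
    rw [Nat.isCoprime_iff_coprime]
    have : ¬ 3 ∣ m3 := by show ¬ 3 ∣ q^2 + 1; omega
    exact (Nat.coprime_comm.mp ((Nat.Prime.coprime_iff_not_dvd Nat.prime_three).mpr this))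
  have h35 : IsCoprime ((m3:ℕ):ℤ) ((m5:ℕ):ℤ) := by
    obtain ⟨u, v, huv⟩ := hcop3
    refine ⟨u - v*(4*x^4-2), v*((m6:ℕ):ℤ), ?_⟩
    rw [e3, e5, e6] at *
    push_cast at huv ⊢
    linear_combination huv
  have h36 : IsCoprime ((m3:ℕ):ℤ) ((m6:ℕ):ℤ) := by
    obtain ⟨u, v, huv⟩ := hcop3
    refine ⟨u - v*(4*x^4-2), v*((m5:ℕ):ℤ), ?_⟩
    rw [e3, e5, e6] at *
    push_cast at huv ⊢
    linear_combination huv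
  refine ⟨?_, ?_, ?_, ?_, ?_, ?_, ?_, ?_, ?_, ?_, ?_, ?_, ?_, ?_, ?_⟩
  · exact Nat.dvd_antisymm hd3 (Nat.dvd_gcd h3m2 h3m4)
  · exact nat_gcd_one_of_int ⟨-(x^2+1), x^2, by rw [e1, e2]; ring⟩
  · exact nat_gcd_one_of_int ⟨-(2*x^4+x^2+1), x^2, by rw [e1, e3]; ring⟩
  · exact nat_gcd_one_of_int ⟨-(2*x^2), 1, by rw [e1, e4]; ring⟩
  · exact nat_gcd_one_of_int ⟨-(4*x^4*(2*x^2+1)), ((m6:ℕ):ℤ), by rw [e1, e5, e6]; ring⟩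
  · exact nat_gcd_one_of_int ⟨-(4*x^4*(2*x^2+1)), ((m5:ℕ):ℤ), by rw [e1, e5, e6]; ring⟩
  · exact nat_gcd_one_of_int ⟨2*x^4-x^2+1, -(x^2), by rw [e2, e3]; ring⟩
  · exact nat_gcd_one_of_int ⟨-(4*x^4*(2*x^2-1)), ((m6:ℕ):ℤ), by rw [e2, e5, e6]; ring⟩
  · exact nat_gcd_one_of_int ⟨-(4*x^4*(2*x^2-1)), ((m5:ℕ):ℤ), by rw [e2, e5, e6]; ring⟩
  · exact nat_gcd_one_of_int ⟨-(2*x^2-1), 2*x^2, by rw [e3, e4]; ring⟩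
  · exact nat_gcd_one_of_int h35
  · exact nat_gcd_one_of_int h36
  · exact nat_gcd_one_of_int ⟨1 - x^2*(4*x^4+2*x^2-1), x^2*((m6:ℕ):ℤ), by rw [e4, e5, e6]; ring⟩
  · exact nat_gcd_one_of_int ⟨1 - x^2*(4*x^4+2*x^2-1), x^2*((m5:ℕ):ℤ), by rw [e4, e5, e6]; ring⟩
  · exact nat_gcd_one_of_int ⟨x^3*((m1:ℕ):ℤ), ((m5:ℕ):ℤ) - x^3*((m1:ℕ):ℤ), by rw [e1, e5, e6]; ring⟩
end

section
/- Let r and s be odd primes with r ≠ s, and let n ≥ 5. In the alternating group Alt_n, there exists an element of order r·s if and only if r + s ≤ n. -/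
open Equiv Equiv.Perm

lemma prime_dvd_multiset_lcm {m : Multiset ℕ} {p : ℕ} (hp : p.Prime) (h : p ∣ m.lcm) :
    ∃ a ∈ m, p ∣ a := by
  induction m using Multiset.induction_on with
  | empty =>
    simp only [Multiset.lcm_zero, Nat.dvd_one] at h
    exact absurd h hp.ne_one
  | cons a m ih =>
    rw [Multiset.lcm_cons] at h
    have : p ∣ a * m.lcm := h.trans (Nat.lcm_dvd_mul a m.lcm)
    rcases (Nat.Prime.dvd_mul hp).mp this with h1 | h2
    · exact ⟨a, Multiset.mem_cons_self a m, h1⟩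
    · obtain ⟨b, hb, hpb⟩ := ih h2
      exact ⟨b, Multiset.mem_cons_of_mem hb, hpb⟩

lemma pair_le_sum {m : Multiset ℕ} {a b : ℕ} (ha : a ∈ m) (hb : b ∈ m) (hab : a ≠ b) :
    a + b ≤ m.sum := by
  have hb' : b ∈ m.erase a := Multiset.mem_erase_of_ne (Ne.symm hab) |>.mpr hb
  have := Multiset.single_le_sum (fun x _ => Nat.zero_le x) b hb'
  have hs : a + (m.erase a).sum = m.sum := by
    rw [← Multiset.sum_cons, Multiset.cons_erase ha]
  omega

lemma aux_formPerm {n : ℕ} (l : List (Fin n)) (hl : l.Nodup) (h2 : 2 ≤ l.length) :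
    l.formPerm.support = l.toFinset ∧ orderOf l.formPerm = l.length ∧
      Perm.sign l.formPerm = -(-1) ^ l.length := by
  have hne : ∀ x, l ≠ [x] := by
    intro x hx; rw [hx] at h2; simp at h2
  have hsupp := List.support_formPerm_of_nodup l hl hne
  have hcyc := List.isCycle_formPerm hl h2
  have hcard : l.formPerm.support.card = l.length := by
    rw [hsupp, List.card_toFinset, List.dedup_eq_self.mpr hl]
  refine ⟨hsupp, ?_, ?_⟩
  · rw [hcyc.orderOf, hcard]
  · rw [hcyc.sign, hcard]

theorem stmt_12 (n r s : ℕ) (hn : 5 ≤ n) (hr : r.Prime) (hs : s.Prime)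
    (hrodd : Odd r) (hsodd : Odd s) (hrs : r ≠ s) (hrn : r ≤ n) (hsn : s ≤ n) :
    (∃ g : alternatingGroup (Fin n), orderOf g = r * s) ↔ r + s ≤ n := by
  have hr2 : 2 ≤ r := hr.two_le
  have hs2 : 2 ≤ s := hs.two_le
  constructor
  · rintro ⟨g, hg⟩
    have hσ : orderOf (g : Perm (Fin n)) = r * s := by
      rw [Subgroup.orderOf_coe, hg]
    set σ : Perm (Fin n) := (g : Perm (Fin n)) with hσdef
    have hlcm : σ.cycleType.lcm = r * s := by rw [lcm_cycleType, hσ]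
    obtain ⟨a, ha, hra⟩ := prime_dvd_multiset_lcm hr (hlcm ▸ Dvd.intro s rfl)
    obtain ⟨b, hb, hsb⟩ := prime_dvd_multiset_lcm hs (hlcm ▸ Dvd.intro_left r rfl)
    have hsum : σ.cycleType.sum ≤ n := by
      rw [sum_cycleType]
      calc σ.support.card ≤ Fintype.card (Fin n) := Finset.card_le_univ _
        _ = n := Fintype.card_fin n
    have ha2 : 2 ≤ a := two_le_of_mem_cycleType ha
    have hb2 : 2 ≤ b := two_le_of_mem_cycleType hb
    by_cases hab : a = b
    · subst hab
      have hco : Nat.Coprime r s := (Nat.coprime_primes hr hs).mpr hrs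
      have : r * s ∣ a := hco.mul_dvd_of_dvd_of_dvd hra hsb
      have h1 : r * s ≤ a := Nat.le_of_dvd (by omega) this
      have h2 : a ≤ σ.cycleType.sum :=
        Multiset.single_le_sum (fun x _ => Nat.zero_le x) a ha
      have h3 : r + s ≤ r * s := Nat.add_le_mul hr2 hs2
      omega
    · have h1 : r ≤ a := Nat.le_of_dvd (by omega) hra
      have h2 : s ≤ b := Nat.le_of_dvd (by omega) hsb
      have h3 := pair_le_sum ha hb hab
      omega
  · intro h
    have e1inj : Function.Injective (fun i : Fin r => (⟨i.val, by omega⟩ : Fin n)) := by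
      intro i j hij
      simp only [Fin.mk.injEq] at hij
      exact Fin.ext hij
    have e2inj : Function.Injective (fun i : Fin s => (⟨r + i.val, by omega⟩ : Fin n)) := by
      intro i j hij
      simp only [Fin.mk.injEq] at hij
      exact Fin.ext (by omega)
    set l1 : List (Fin n) := (List.finRange r).map (fun i => ⟨i.val, by omega⟩) with hl1def
    set l2 : List (Fin n) := (List.finRange s).map (fun i => ⟨r + i.val, by omega⟩) with hl2def
    have hl1nd : l1.Nodup := (List.nodup_finRange r).map e1inj
    have hl2nd : l2.Nodup := (List.nodup_finRange s).map e2inj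
    have hl1len : l1.length = r := by simp [hl1def]
    have hl2len : l2.length = s := by simp [hl2def]
    obtain ⟨hsupp1, hord1, hsign1⟩ := aux_formPerm l1 hl1nd (by omega)
    obtain ⟨hsupp2, hord2, hsign2⟩ := aux_formPerm l2 hl2nd (by omega)
    have hdisj : Perm.Disjoint l1.formPerm l2.formPerm := by
      rw [Perm.disjoint_iff_disjoint_support, hsupp1, hsupp2]
      rw [Finset.disjoint_left]
      intro x hx1 hx2
      simp only [hl1def, List.mem_toFinset, List.mem_map, List.mem_finRange, true_and] at hx1
      simp only [hl2def, List.mem_toFinset, List.mem_map, List.mem_finRange, true_and] at hx2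
      obtain ⟨i, hi⟩ := hx1
      obtain ⟨j, hj⟩ := hx2
      rw [← hj] at hi
      have := congrArg Fin.val hi
      simp only at this
      omega
    set π : Perm (Fin n) := l1.formPerm * l2.formPerm with hπdef
    have hπord : orderOf π = r * s := by
      rw [hπdef, hdisj.orderOf, hord1, hord2, hl1len, hl2len]
      exact Nat.Coprime.lcm_eq_mul ((Nat.coprime_primes hr hs).mpr hrs)
    have hπsign : Perm.sign π = 1 := by
      rw [hπdef, map_mul, hsign1, hsign2, hl1len, hl2len, hrodd.neg_one_pow, hsodd.neg_one_pow]
      decide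
    refine ⟨⟨π, Perm.mem_alternatingGroup.mpr hπsign⟩, ?_⟩
    rw [Subgroup.orderOf_mk, hπord]
end

section
/- Let r be an odd prime and n ≥ 5. The alternating group Alt_n contains an element of order 2r if and only if r + 4 ≤ n. -/
theorem stmt_13 (n r : ℕ) (hn : 5 ≤ n) (hr : r.Prime) (hrodd : Odd r)
    (hrn : r ≤ n) :
    (∃ g : alternatingGroup (Fin n), orderOf g = 2 * r) ↔ r + 4 ≤ n := by
  have hr3 : 3 ≤ r := by
    rcases hrodd with ⟨k, hk⟩
    have := hr.two_le
    omega
  constructor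
  · rintro ⟨g, hg⟩
    set σ := (g : Equiv.Perm (Fin n)) with hσdef
    have hord : orderOf σ = 2 * r := by rw [Subgroup.orderOf_coe]; exact hg
    have hlcm : σ.cycleType.lcm = 2 * r := by rw [Equiv.Perm.lcm_cycleType]; exact hord
    have hsign : Equiv.Perm.sign σ = 1 := Equiv.Perm.mem_alternatingGroup.mp g.2
    have heven : Even (σ.cycleType.sum + Multiset.card σ.cycleType) := by
      rw [Equiv.Perm.sign_of_cycleType] at hsign
      exact (neg_one_pow_eq_one_iff_even (by decide : (-1 : ℤˣ) ≠ 1)).mp hsign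
    have hsum_le : σ.cycleType.sum ≤ n := by
      rw [Equiv.Perm.sum_cycleType]
      simpa using Finset.card_le_univ σ.support
    have hclass : ∀ a ∈ σ.cycleType, a = 2 ∨ a = r ∨ a = 2 * r := by
      intro a ha
      have hdvd : a ∣ 2 * r := hlcm ▸ Multiset.dvd_lcm ha
      have h2a : 2 ≤ a := Equiv.Perm.two_le_of_mem_cycleType ha
      by_cases h2 : 2 ∣ a
      · obtain ⟨k, rfl⟩ := h2
        have hk : k ∣ r := (Nat.mul_dvd_mul_iff_left (by norm_num : 0 < 2)).mp hdvd
        rcases hr.eq_one_or_self_of_dvd k hk with rfl | rfl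
        · left; rfl
        · right; right; rfl
      · have hcop : Nat.Coprime a 2 := Nat.coprime_two_right.mpr (Nat.odd_iff.mpr (by omega))
        have har : a ∣ r := (Nat.Coprime.dvd_of_dvd_mul_left hcop hdvd)
        rcases hr.eq_one_or_self_of_dvd a har with rfl | rfl
        · omega
        · right; left; rfl
    by_cases h2r : 2 * r ∈ σ.cycleType
    · obtain ⟨M', hM'⟩ := Multiset.exists_cons_of_mem h2r
      rcases eq_or_ne M' 0 with rfl | hne
      · rw [hM'] at heven
        simp [Nat.even_add_one, Nat.even_mul] at heven
      · obtain ⟨x, hx⟩ := Multiset.exists_mem_of_ne_zero hne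
        have hx2 : 2 ≤ x :=
          Equiv.Perm.two_le_of_mem_cycleType (by rw [hM']; exact Multiset.mem_cons_of_mem hx)
        have hxs : x ≤ M'.sum := Multiset.le_sum_of_mem hx
        have : 2 * r + x ≤ σ.cycleType.sum := by rw [hM', Multiset.sum_cons]; omega
        omega
    · -- only 2's and r's
      have hclass' : ∀ a ∈ σ.cycleType, a = 2 ∨ a = r := by
        intro a ha
        rcases hclass a ha with h | h | h
        · exact Or.inl h
        · exact Or.inr h
        · exact absurd (h ▸ ha) h2r
      set a := (σ.cycleType.filter (· = 2)).card with hadef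
      set b := (σ.cycleType.filter (fun x => ¬ x = 2)).card with hbdef
      have h2rep : σ.cycleType.filter (· = 2) = Multiset.replicate a 2 := by
        rw [hadef]
        exact Multiset.eq_replicate_card.mpr (fun x hx => by
          simpa using (Multiset.mem_filter.mp hx).2)
      have hrrep : σ.cycleType.filter (fun x => ¬ x = 2) = Multiset.replicate b r := by
        rw [hbdef]
        refine Multiset.eq_replicate_card.mpr (fun x hx => ?_)
        obtain ⟨hxm, hx2⟩ := Multiset.mem_filter.mp hx
        rcases hclass' x hxm with h | h
        · exact absurd h hx2
        · exact h
      have hsplit : Multiset.replicate a 2 + Multiset.replicate b r = σ.cycleType := by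
        rw [← h2rep, ← hrrep]; exact Multiset.filter_add_not _ _
      have h1 : σ.cycleType.sum = 2 * a + r * b := by
        rw [← hsplit, Multiset.sum_add, Multiset.sum_replicate, Multiset.sum_replicate]
        simp [mul_comm]
      have h2 : Multiset.card σ.cycleType = a + b := by
        rw [← hsplit]; simp
      have hb1 : 1 ≤ b := by
        by_contra hb
        have hb0 : b = 0 := by omega
        have hdvd2 : σ.cycleType.lcm ∣ 2 := Multiset.lcm_dvd.mpr (fun x hx => by
          rcases hclass' x hx with h | h
          · exact h ▸ dvd_rfl
          · exfalso
            have hmemf : x ∈ σ.cycleType.filter (fun x => ¬ x = 2) :=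
              Multiset.mem_filter.mpr ⟨hx, by omega⟩
            rw [hrrep, hb0] at hmemf
            simp at hmemf)
        rw [hlcm] at hdvd2
        have := Nat.le_of_dvd (by norm_num) hdvd2
        omega
      have ha1 : 1 ≤ a := by
        by_contra hha
        have ha0 : a = 0 := by omega
        have hdvdr : σ.cycleType.lcm ∣ r := Multiset.lcm_dvd.mpr (fun x hx => by
          rcases hclass' x hx with h | h
          · exfalso
            have hmemf : x ∈ σ.cycleType.filter (· = 2) :=
              Multiset.mem_filter.mpr ⟨hx, by simp [h]⟩
            rw [h2rep, ha0] at hmemf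
            simp at hmemf
          · exact h ▸ dvd_rfl)
        rw [hlcm] at hdvdr
        have := Nat.le_of_dvd (by omega) hdvdr
        omega
      obtain ⟨m, hm⟩ := heven
      obtain ⟨k, hk⟩ := hrodd
      obtain ⟨c, hc⟩ : ∃ c, σ.cycleType.sum + Multiset.card σ.cycleType = 3 * a + 2 * c :=
        ⟨(k + 1) * b, by rw [h1, h2, hk]; ring⟩
      have ha2 : 2 ≤ a := by omega
      have hrb : r * 1 ≤ r * b := Nat.mul_le_mul_left r hb1
      have : r + 4 ≤ σ.cycleType.sum := by rw [h1]; omega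
      omega
  · intro h
    have hcard : Fintype.card (Fin n) = n := Fintype.card_fin n
    obtain ⟨g, hg⟩ := (Equiv.Perm.exists_with_cycleType_iff (Fin n)
        (m := ({2, 2, r} : Multiset ℕ))).mpr ⟨by simp [hcard]; omega,
          by intro x hx; simp at hx; rcases hx with rfl | rfl | rfl <;> omega⟩
    have hsign : Equiv.Perm.sign g = 1 := by
      rw [Equiv.Perm.sign_of_cycleType, hg]
      have : Multiset.sum ({2, 2, r} : Multiset ℕ) + Multiset.card ({2, 2, r} : Multiset ℕ)
          = r + 7 := by simp; ring
      rw [this]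
      obtain ⟨k, hk⟩ := hrodd
      have : r + 7 = 2 * (k + 4) := by omega
      rw [this, pow_mul]
      norm_num
    have hord : orderOf g = 2 * r := by
      rw [← Equiv.Perm.lcm_cycleType, hg]
      have hc2r : Nat.lcm 2 r = 2 * r := (Nat.coprime_two_left.mpr hrodd).lcm_eq_mul
      have h22r : Nat.lcm 2 (2 * r) = 2 * r :=
        Nat.dvd_antisymm (Nat.lcm_dvd (dvd_mul_right 2 r) dvd_rfl) (Nat.dvd_lcm_right _ _)
      simp only [Multiset.insert_eq_cons, Multiset.lcm_cons, Multiset.lcm_singleton,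
        normalize_eq, lcm_eq_nat_lcm]
      rw [hc2r, h22r]
    exact ⟨⟨g, Equiv.Perm.mem_alternatingGroup.mpr hsign⟩, by
      rw [Subgroup.orderOf_mk]; exact hord⟩
end
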